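/- Consider the regularization algorithm for least squares: f(u) = (1/2)‖R̂(u)‖² where R̂ : ℝⁿ → ℝ^m is continuously differentiable with Jacobian Ĝ, and ∇f is L-Lipschitz continuous. Let η ∈ (0,1), 0 < γ_min ≤ γ_0, and generate sequences (u_k), (γ_k) as follows: at iteration k set g_k = Ĝ(u_k)ᵀR̂(u_k), pick a symmetric positive semidefinite H_k with ‖H_k‖ ≤ M_H, set s_k = −(H_k + γ_k I)⁻¹ g_k and m_k(s) = f(u_k) + g_kᵀs + (1/2)sᵀ(H_k + γ_k I)s; if f(u_k) − f(u_k + s_k) ≥ η(m_k(0) − m_k(s_k)) then u_{k+1} = u_k + s_k and γ_{k+1} = max{γ_k/2, γ_min} (successful iteration), otherwise u_{k+1} = u_k and γ_{k+1} = 2γ_k. Let γ̄ = (L − M_H + √((L − M_H)² + 4(2−η)L M_H))/(2(2−η)) and γ_max = max{1, γ_0, 2γ̄}. Fix ε_R > 0 with ε_R² ≤ 2f(u_0) and ε_g ∈ (0,1), and let N be such that for every k ≤ N one has ‖R̂(u_k)‖ > ε_R and ‖g_k‖ > ε_g‖R̂(u_k)‖ (and g_k ≠ 0). Then the number of successful iterations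 among 0,…,N−1 is at most 1 + ((M_H + γ_max)/(η ε_g²))·ln(2 f(u_0)/ε_R²), and the total number of iterations satisfies N ≤ (1 + ⌈1 + log₂(γ_max/γ_min)⌉)·(2 + ((M_H + γ_max)/(η ε_g²))·ln(2 f(u_0)/ε_R²)). -/

import Mathlib

open Matrix
open scoped Matrix.Norms.L2Operator RealInnerProductSpace Gradient

section AuxLemmas

variable {n : ℕ}

lemma aux_norm_one_le (n : ℕ) : ‖(1 : Matrix (Fin n) (Fin n) ℝ)‖ ≤ 1 := by
  rw [Matrix.l2_opNorm_def]
  refine ContinuousLinearMap.opNorm_le_bound _ zero_le_one fun x => ?_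
  simp [Matrix.toEuclideanLin_apply, Matrix.one_mulVec]

lemma aux_norm_mulVec (M : Matrix (Fin n) (Fin n) ℝ) (x : EuclideanSpace ℝ (Fin n)) :
    ‖Matrix.toEuclideanLin M x‖ ≤ ‖M‖ * ‖x‖ := by
  rw [Matrix.l2_opNorm_def]
  exact ((Matrix.toEuclideanLin M).toContinuousLinearMap).le_opNorm x

lemma aux_inner_transpose (m : ℕ) (M : Matrix (Fin m) (Fin n) ℝ)
    (y : EuclideanSpace ℝ (Fin m)) (x : EuclideanSpace ℝ (Fin n)) :
    ⟪Matrix.toEuclideanLin Mᵀ y, x⟫ = ⟪y, Matrix.toEuclideanLin M x⟫ := by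
  rw [← Matrix.conjTranspose_eq_transpose_of_trivial,
    Matrix.toEuclideanLin_conjTranspose_eq_adjoint]
  exact LinearMap.adjoint_inner_left _ _ _

lemma aux_mul_apply (M N : Matrix (Fin n) (Fin n) ℝ) (x : EuclideanSpace ℝ (Fin n)) :
    Matrix.toEuclideanLin (M * N) x = Matrix.toEuclideanLin M (Matrix.toEuclideanLin N x) := by
  simp [Matrix.toEuclideanLin_apply, Matrix.mulVec_mulVec]

lemma aux_psd_inner_nonneg {M : Matrix (Fin n) (Fin n) ℝ} (hM : M.PosSemidef)
    (x : EuclideanSpace ℝ (Fin n)) : 0 ≤ ⟪x, Matrix.toEuclideanLin M x⟫ := by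
  rw [EuclideanSpace.inner_eq_star_dotProduct]
  rw [dotProduct_comm]
  simpa [Matrix.toEuclideanLin_apply] using hM.dotProduct_mulVec_nonneg (WithLp.ofLp x)

open scoped MatrixOrder in
lemma aux_psd_cauchy {M : Matrix (Fin n) (Fin n) ℝ} (hM : M.PosSemidef)
    (x : EuclideanSpace ℝ (Fin n)) :
    ‖Matrix.toEuclideanLin M x‖ ^ 2 ≤ ‖M‖ * ⟪x, Matrix.toEuclideanLin M x⟫ := by
  set B := CFC.sqrt M with hBdef
  have hBB : B * B = M := CFC.sqrt_mul_sqrt_self M hM.nonneg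
  have hBpsd : B.PosSemidef := (CFC.sqrt_nonneg M).posSemidef
  have hBH : Bᵀ = B := by
    rw [← Matrix.conjTranspose_eq_transpose_of_trivial]; exact hBpsd.isHermitian
  have hMx : Matrix.toEuclideanLin M x = Matrix.toEuclideanLin B (Matrix.toEuclideanLin B x) := by
    rw [← hBB, aux_mul_apply]
  have hnB : ‖B‖ * ‖B‖ = ‖M‖ := by
    have := Matrix.l2_opNorm_conjTranspose_mul_self B
    rw [show Bᴴ = B from hBpsd.isHermitian, hBB] at this
    exact this.symm
  have h1 : ‖Matrix.toEuclideanLin M x‖ ≤ ‖B‖ * ‖Matrix.toEuclideanLin B x‖ := by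
    rw [hMx]; exact aux_norm_mulVec B _
  have h2 : ‖Matrix.toEuclideanLin B x‖ ^ 2 = ⟪x, Matrix.toEuclideanLin M x⟫ := by
    have h3 := aux_inner_transpose n B x (Matrix.toEuclideanLin B x)
    rw [hBH] at h3
    rw [← real_inner_self_eq_norm_sq, hMx, h3]
  calc ‖Matrix.toEuclideanLin M x‖ ^ 2 ≤ (‖B‖ * ‖Matrix.toEuclideanLin B x‖) ^ 2 := by
        apply pow_le_pow_left₀ (norm_nonneg _) h1
    _ = (‖B‖ * ‖B‖) * ‖Matrix.toEuclideanLin B x‖ ^ 2 := by ring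
    _ = ‖M‖ * ⟪x, Matrix.toEuclideanLin M x⟫ := by rw [hnB, h2]

lemma aux_posdef_inv {A : Matrix (Fin n) (Fin n) ℝ} (hA : A.PosDef)
    (g : EuclideanSpace ℝ (Fin n)) (w : EuclideanSpace ℝ (Fin n))
    (hw : w = Matrix.toEuclideanLin A⁻¹ g) :
    g = Matrix.toEuclideanLin A w ∧ ‖g‖ ^ 2 ≤ ‖A‖ * ⟪g, w⟫ := by
  have hAinv : A * A⁻¹ = 1 :=
    Matrix.mul_nonsing_inv A (Matrix.isUnit_iff_isUnit_det _ |>.mp hA.isUnit)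
  have hg : g = Matrix.toEuclideanLin A w := by
    rw [hw, ← aux_mul_apply, hAinv]
    simp [Matrix.toEuclideanLin_apply, Matrix.one_mulVec]
  refine ⟨hg, ?_⟩
  have := aux_psd_cauchy hA.posSemidef w
  rw [← hg] at this
  calc ‖g‖ ^ 2 ≤ ‖A‖ * ⟪w, g⟫ := this
    _ = ‖A‖ * ⟪g, w⟫ := by rw [real_inner_comm]

lemma descent_lemma {E : Type*} [NormedAddCommGroup E] [InnerProductSpace ℝ E] [CompleteSpace E]
    (f : E → ℝ) (G : E → E) (hG : ∀ x, HasGradientAt f (G x) x)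
    (L : ℝ) (hL : 0 ≤ L) (hLip : ∀ x y, ‖G x - G y‖ ≤ L * ‖x - y‖)
    (x v : E) : f (x + v) ≤ f x + ⟪G x, v⟫ + L / 2 * ‖v‖ ^ 2 := by
  have hcont : Continuous G := by
    refine (LipschitzWith.of_dist_le_mul (K := L.toNNReal) fun a b => ?_).continuous
    rw [dist_eq_norm, dist_eq_norm, Real.coe_toNNReal L hL]
    exact hLip a b
  set φ' : ℝ → ℝ := fun t => ⟪G (x + t • v), v⟫ with hφ'
  have hder : ∀ t : ℝ, HasDerivAt (fun t : ℝ => f (x + t • v)) (φ' t) t := by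
    intro t
    have hline : HasDerivAt (fun t : ℝ => x + t • v) v t := by
      simpa using ((hasDerivAt_id t).smul_const v).const_add x
    have hf := hasGradientAt_iff_hasFDerivAt.mp (hG (x + t • v))
    have h := hf.comp_hasDerivAt t hline
    simp only [InnerProductSpace.toDual_apply_apply] at h
    exact h
  have hφcont : Continuous φ' := by
    apply Continuous.inner
    · exact hcont.comp (by continuity)
    · exact continuous_const
  have h1 : ∫ t in (0:ℝ)..1, φ' t = f (x + v) - f x := by
    have := intervalIntegral.integral_eq_sub_of_hasDerivAt (a := 0) (b := 1)
      (fun t _ => hder t) (hφcont.intervalIntegrable 0 1)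
    simpa using this
  have h2 : ∫ t in (0:ℝ)..1, φ' t ≤ ∫ t in (0:ℝ)..1, (⟪G x, v⟫ + (L * ‖v‖ ^ 2) * t) := by
    apply intervalIntegral.integral_mono_on zero_le_one
      (hφcont.intervalIntegrable 0 1)
      ((by fun_prop : Continuous fun t : ℝ => ⟪G x, v⟫ + (L * ‖v‖ ^ 2) * t).intervalIntegrable 0 1)
    intro t ht
    rcases ht with ⟨ht0, _⟩
    have : φ' t - ⟪G x, v⟫ = ⟪G (x + t • v) - G x, v⟫ := by
      rw [inner_sub_left]
    have hb : φ' t - ⟪G x, v⟫ ≤ (L * ‖v‖ ^ 2) * t := by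
      rw [this]
      calc ⟪G (x + t • v) - G x, v⟫ ≤ ‖G (x + t • v) - G x‖ * ‖v‖ := real_inner_le_norm _ _
        _ ≤ (L * ‖x + t • v - x‖) * ‖v‖ := by
            apply mul_le_mul_of_nonneg_right (hLip _ _) (norm_nonneg _)
        _ = (L * ‖v‖ ^ 2) * t := by
            have : x + t • v - x = t • v := by abel
            rw [this, norm_smul, Real.norm_eq_abs, abs_of_nonneg ht0]
            ring
    linarith
  have h3 : ∫ t in (0:ℝ)..1, (⟪G x, v⟫ + (L * ‖v‖ ^ 2) * t) = ⟪G x, v⟫ + L / 2 * ‖v‖ ^ 2 := by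
    rw [intervalIntegral.integral_add (intervalIntegrable_const)
      ((by fun_prop : Continuous fun t : ℝ => (L * ‖v‖ ^ 2) * t).intervalIntegrable 0 1),
      intervalIntegral.integral_const_mul, integral_id, intervalIntegral.integral_const]
    simp
    ring
  rw [h1] at h2
  rw [h3] at h2
  linarith

lemma grad_half_normSq {n m : ℕ}
    (Rh : EuclideanSpace ℝ (Fin n) → EuclideanSpace ℝ (Fin m))
    (hRh : ContDiff ℝ 1 Rh)
    (Gh : EuclideanSpace ℝ (Fin n) → Matrix (Fin m) (Fin n) ℝ)
    (hJac : ∀ x, fderiv ℝ Rh x = (Matrix.toEuclideanLin (Gh x)).toContinuousLinearMap)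
    (f : EuclideanSpace ℝ (Fin n) → ℝ) (hf : ∀ x, f x = (1/2) * ‖Rh x‖^2)
    (x : EuclideanSpace ℝ (Fin n)) :
    HasGradientAt f (Matrix.toEuclideanLin (Gh x)ᵀ (Rh x)) x := by
  have hR' : HasFDerivAt Rh ((Matrix.toEuclideanLin (Gh x)).toContinuousLinearMap) x := by
    have := (hRh.differentiable one_ne_zero x).hasFDerivAt
    rwa [hJac x] at this
  have h1 := (hR'.inner ℝ hR').const_mul (1/2 : ℝ)
  have hfe : f = fun y => (1/2 : ℝ) * ⟪Rh y, Rh y⟫ :=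
    funext fun y => by rw [hf y, real_inner_self_eq_norm_sq]
  rw [hfe]
  have h2 := hasFDerivAt_iff_hasGradientAt.mp h1
  convert h2 using 1
  apply_fun (InnerProductSpace.toDual ℝ (EuclideanSpace ℝ (Fin n))) using
    (InnerProductSpace.toDual ℝ (EuclideanSpace ℝ (Fin n))).injective
  rw [LinearIsometryEquiv.apply_symm_apply]
  symm
  ext h
  simp only [InnerProductSpace.toDual_apply_apply, ContinuousLinearMap.smul_apply,
    ContinuousLinearMap.comp_apply, ContinuousLinearMap.prod_apply, fderivInnerCLM_apply,
    LinearMap.coe_toContinuousLinearMap', smul_eq_mul]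
  rw [aux_inner_transpose]
  rw [real_inner_comm ((Matrix.toEuclideanLin (Gh x)) h) (Rh x)]
  ring

end AuxLemmas

set_option maxHeartbeats 2000000 in
/-- Iteration complexity of the exact regularization method for
least squares: the number of successful iterations before reaching an
`(ε_R, ε_g)`-stationary point is at most
`1 + ((M_H+γ_max)/(η ε_g²))·ln(2 f(u_0)/ε_R²)`, and the total number of
iterations is at most
`(1 + ⌈1 + log₂(γ_max/γ_min)⌉)·(2 + ((M_H+γ_max)/(η ε_g²))·ln(2 f(u_0)/ε_R²))`. -/
theorem exact_regularization_complexity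
    (n m : ℕ)
    (Rh : EuclideanSpace ℝ (Fin n) → EuclideanSpace ℝ (Fin m))
    (hRh : ContDiff ℝ 1 Rh)
    (Gh : EuclideanSpace ℝ (Fin n) → Matrix (Fin m) (Fin n) ℝ)
    (hJac : ∀ x, fderiv ℝ Rh x = (Matrix.toEuclideanLin (Gh x)).toContinuousLinearMap)
    (f : EuclideanSpace ℝ (Fin n) → ℝ) (hf : ∀ x, f x = (1/2) * ‖Rh x‖^2)
    (L : ℝ) (hL : 0 < L)
    (hLip : ∀ x y : EuclideanSpace ℝ (Fin n), ‖∇ f x - ∇ f y‖ ≤ L * ‖x - y‖)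
    (η : ℝ) (hη : η ∈ Set.Ioo (0:ℝ) 1)
    (γmin : ℝ) (hγmin : 0 < γmin)
    (M_H : ℝ) (hMH : 0 < M_H)
    -- the sequences generated by the algorithm
    (u : ℕ → EuclideanSpace ℝ (Fin n)) (γ : ℕ → ℝ) (hγ0 : γmin ≤ γ 0)
    (Hm : ℕ → Matrix (Fin n) (Fin n) ℝ)
    (hHpsd : ∀ k, (Hm k).PosSemidef) (hHbd : ∀ k, ‖Hm k‖ ≤ M_H)
    (g s : ℕ → EuclideanSpace ℝ (Fin n))
    (hg : ∀ k, g k = Matrix.toEuclideanLin (Gh (u k))ᵀ (Rh (u k)))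
    (hs : ∀ k, s k = -(Matrix.toEuclideanLin
      (Hm k + γ k • (1 : Matrix (Fin n) (Fin n) ℝ))⁻¹ (g k)))
    (mdl : ℕ → EuclideanSpace ℝ (Fin n) → ℝ)
    (hmdl : ∀ k v, mdl k v = f (u k) + ⟪g k, v⟫ +
      (1/2) * ⟪v, Matrix.toEuclideanLin (Hm k + γ k • (1 : Matrix (Fin n) (Fin n) ℝ)) v⟫)
    (Succ : ℕ → Prop)
    (hSucc : ∀ k, Succ k ↔ f (u k) - f (u k + s k) ≥ η * (mdl k 0 - mdl k (s k)))
    (hupS : ∀ k, Succ k → u (k + 1) = u k + s k ∧ γ (k + 1) = max (γ k / 2) γmin)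
    (hupU : ∀ k, ¬Succ k → u (k + 1) = u k ∧ γ (k + 1) = 2 * γ k)
    -- the constants of the complexity bound
    (γbar γmax : ℝ)
    (hγbar : γbar = (L - M_H + Real.sqrt ((L - M_H)^2 + 4 * (2 - η) * L * M_H)) /
      (2 * (2 - η)))
    (hγmax : γmax = max 1 (max (γ 0) (2 * γbar)))
    -- tolerances, and non-stationarity up to iteration N
    (ε_R : ℝ) (hεR : 0 < ε_R) (hεRJ0 : ε_R^2 ≤ 2 * f (u 0))
    (ε_g : ℝ) (hεg : ε_g ∈ Set.Ioo (0:ℝ) 1)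
    (N : ℕ)
    (hstat : ∀ k ≤ N, ε_R < ‖Rh (u k)‖ ∧ ε_g * ‖Rh (u k)‖ < ‖g k‖ ∧ g k ≠ 0) :
    (Nat.card {k : ℕ | k < N ∧ Succ k} : ℝ) ≤
        1 + ((M_H + γmax) / (η * ε_g^2)) * Real.log (2 * f (u 0) / ε_R^2) ∧
      (N : ℝ) ≤ (1 + (⌈(1:ℝ) + Real.logb 2 (γmax / γmin)⌉ : ℝ)) *
        (2 + ((M_H + γmax) / (η * ε_g^2)) * Real.log (2 * f (u 0) / ε_R^2)) := by
  classical
  obtain ⟨hη0, hη1⟩ := hη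
  obtain ⟨hεg0, hεg1⟩ := hεg
  set A : ℕ → Matrix (Fin n) (Fin n) ℝ :=
    fun k => Hm k + γ k • (1 : Matrix (Fin n) (Fin n) ℝ) with hA
  -- basic bounds on γ
  have hγlb : ∀ k, γmin ≤ γ k := by
    intro k
    induction k with
    | zero => exact hγ0
    | succ k ih =>
      by_cases hk : Succ k
      · rw [(hupS k hk).2]; exact le_max_right _ _
      · rw [(hupU k hk).2]; linarith
  have hγpos : ∀ k, 0 < γ k := fun k => lt_of_lt_of_le hγmin (hγlb k)
  have hApos : ∀ k, (A k).PosDef := by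
    intro k
    apply Matrix.PosDef.posSemidef_add (hHpsd k)
    rw [Matrix.smul_one_eq_diagonal]
    exact Matrix.PosDef.diagonal fun _ => hγpos k
  -- gradient identities
  have hGrad : ∀ x, HasGradientAt f (Matrix.toEuclideanLin (Gh x)ᵀ (Rh x)) x :=
    grad_half_normSq Rh hRh Gh hJac f hf
  set Gfun : EuclideanSpace ℝ (Fin n) → EuclideanSpace ℝ (Fin n) :=
    fun x => Matrix.toEuclideanLin (Gh x)ᵀ (Rh x) with hGfun
  have hgeq : ∀ x, ∇ f x = Gfun x := fun x => (hGrad x).gradient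
  have hLip' : ∀ x y, ‖Gfun x - Gfun y‖ ≤ L * ‖x - y‖ := by
    intro x y; rw [← hgeq, ← hgeq]; exact hLip x y
  have hdesc : ∀ x v, f (x + v) ≤ f x + ⟪Gfun x, v⟫ + L / 2 * ‖v‖ ^ 2 :=
    descent_lemma f Gfun hGrad L hL.le hLip'
  have hgk : ∀ k, g k = Gfun (u k) := hg
  -- quadratic identities
  set w : ℕ → EuclideanSpace ℝ (Fin n) := fun k => Matrix.toEuclideanLin (A k)⁻¹ (g k) with hw
  have hsw : ∀ k, s k = -w k := hs
  have hAg : ∀ k, g k = Matrix.toEuclideanLin (A k) (w k) :=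
    fun k => (aux_posdef_inv (hApos k) (g k) (w k) rfl).1
  have hAcs : ∀ k, ‖g k‖ ^ 2 ≤ ‖A k‖ * ⟪g k, w k⟫ :=
    fun k => (aux_posdef_inv (hApos k) (g k) (w k) rfl).2
  have hgw_eq : ∀ k, ⟪g k, w k⟫ = ⟪w k, Matrix.toEuclideanLin (A k) (w k)⟫ := by
    intro k
    conv_lhs => rw [hAg k]
    rw [real_inner_comm]
  have hgw_nonneg : ∀ k, 0 ≤ ⟪g k, w k⟫ := by
    intro k
    rw [hgw_eq k]
    exact aux_psd_inner_nonneg (hApos k).posSemidef _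
  have hAnorm : ∀ k, ‖A k‖ ≤ M_H + γ k := by
    intro k
    calc ‖A k‖ ≤ ‖Hm k‖ + ‖γ k • (1 : Matrix (Fin n) (Fin n) ℝ)‖ := norm_add_le _ _
      _ ≤ M_H + γ k := by
          refine add_le_add (hHbd k) ?_
          rw [norm_smul, Real.norm_eq_abs, abs_of_pos (hγpos k)]
          calc γ k * ‖(1 : Matrix (Fin n) (Fin n) ℝ)‖ ≤ γ k * 1 :=
              mul_le_mul_of_nonneg_left (aux_norm_one_le n) (hγpos k).le
            _ = γ k := mul_one _
  -- model decrease
  have hAsk : ∀ k, Matrix.toEuclideanLin (A k) (s k) = -(g k) := by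
    intro k
    rw [hsw k, map_neg, ← hAg k]
  have hgs : ∀ k, ⟪g k, s k⟫ = -⟪g k, w k⟫ := by
    intro k
    rw [hsw k, inner_neg_right]
  have hsAs : ∀ k, ⟪s k, Matrix.toEuclideanLin (A k) (s k)⟫ = ⟪g k, w k⟫ := by
    intro k
    rw [hAsk k, hsw k, inner_neg_neg, real_inner_comm, hgw_eq k]
  have hmd : ∀ k, mdl k 0 - mdl k (s k) = (1/2) * ⟪g k, w k⟫ := by
    intro k
    rw [hmdl k 0, hmdl k (s k)]
    rw [← hA] at *
    have h0 : Matrix.toEuclideanLin (A k) (0 : EuclideanSpace ℝ (Fin n)) = 0 := map_zero _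
    rw [h0, inner_zero_right, inner_zero_right, hgs k, hsAs k]
    ring
  -- ⟪s,As⟫ ≥ γ‖s‖²
  have hsAs_ge : ∀ k, γ k * ‖s k‖ ^ 2 ≤ ⟪s k, Matrix.toEuclideanLin (A k) (s k)⟫ := by
    intro k
    have hsplit : Matrix.toEuclideanLin (A k) (s k)
        = Matrix.toEuclideanLin (Hm k) (s k) + γ k • s k := by
      rw [hA]
      simp only [Matrix.toEuclideanLin_apply, Matrix.add_mulVec, Matrix.smul_mulVec,
        Matrix.one_mulVec]
      rfl
    rw [hsplit, inner_add_right, real_inner_smul_right, real_inner_self_eq_norm_sq]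
    have := aux_psd_inner_nonneg (hHpsd k) (s k)
    linarith
  -- success threshold
  have h2η : 0 < 2 - η := by linarith
  have hthresh : ∀ k, L ≤ (2 - η) * γ k → Succ k := by
    intro k hk
    rw [hSucc k]
    have hd := hdesc (u k) (s k)
    rw [← hgk k] at hd
    have ha : f (u k) - f (u k + s k) ≥ -⟪g k, s k⟫ - L / 2 * ‖s k‖ ^ 2 := by linarith
    rw [hgs k] at ha
    rw [hmd k]
    have h1 : ⟪g k, w k⟫ = ⟪s k, Matrix.toEuclideanLin (A k) (s k)⟫ := (hsAs k).symm
    have h2 := hsAs_ge k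
    have h3 : (0:ℝ) ≤ ‖s k‖ ^ 2 := sq_nonneg _
    rw [h1] at ha ⊢
    nlinarith [h2, h3, hk, hη0.le, hη1.le]
  -- upper bound on γ
  have hγ0max : γ 0 ≤ γmax := by
    rw [hγmax]; exact le_max_of_le_right (le_max_left _ _)
  have h1max : (1:ℝ) ≤ γmax := by rw [hγmax]; exact le_max_left _ _
  have hbar : L / (2 - η) ≤ γbar := by
    have hsq : L + M_H ≤ Real.sqrt ((L - M_H)^2 + 4 * (2 - η) * L * M_H) := by
      rw [show (L - M_H)^2 + 4 * (2 - η) * L * M_H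
          = (L + M_H)^2 + 4 * (1 - η) * L * M_H by ring]
      have h4 : 0 ≤ 4 * (1 - η) * L * M_H :=
        mul_nonneg (mul_nonneg (by linarith) hL.le) hMH.le
      have h5 : (0:ℝ) ≤ (L + M_H)^2 + 4 * (1 - η) * L * M_H := add_nonneg (sq_nonneg _) h4
      nlinarith [Real.sq_sqrt h5,
        Real.sqrt_nonneg ((L + M_H)^2 + 4 * (1 - η) * L * M_H), hL.le, hMH.le]
    rw [hγbar, div_le_div_iff₀ h2η (mul_pos two_pos h2η)]
    have h6 : (L + M_H) * (2 - η)
        ≤ Real.sqrt ((L - M_H)^2 + 4 * (2 - η) * L * M_H) * (2 - η) :=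
      mul_le_mul_of_nonneg_right hsq h2η.le
    linarith [h6]
  have h2bar : 2 * γbar ≤ γmax := by
    rw [hγmax]; exact le_max_of_le_right (le_max_right _ _)
  have hγub : ∀ k, γ k ≤ γmax := by
    intro k
    induction k with
    | zero => exact hγ0max
    | succ k ih =>
      by_cases hk : Succ k
      · rw [(hupS k hk).2]
        apply max_le _ (hγ0.trans hγ0max)
        linarith [hγpos k]
      · rw [(hupU k hk).2]
        have : ¬ (L ≤ (2 - η) * γ k) := fun hc => hk (hthresh k hc)
        push_neg at this
        have : γ k < L / (2 - η) := by
          rw [lt_div_iff₀ h2η]; linarith [this]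
        linarith [hbar, h2bar]
  -- positivity facts
  have hf0pos : 0 < f (u 0) := by
    have : (0:ℝ) < ε_R ^ 2 := by positivity
    linarith
  have hfpos : ∀ k ≤ N, ε_R ^ 2 / 2 < f (u k) := by
    intro k hk
    have h0 := (hstat k hk).1
    have h2 : ε_R ^ 2 < ‖Rh (u k)‖ ^ 2 := by
      apply pow_lt_pow_left₀ h0 hεR.le
      norm_num
    rw [hf (u k)]
    linarith
  set P : ℝ := M_H + γmax with hP
  have hPpos : 0 < P := by positivity
  have hP1 : 1 < P := by rw [hP]; linarith
  set θ : ℝ := 1 - η * ε_g ^ 2 / P with hθ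
  have hηε : 0 < η * ε_g ^ 2 := by positivity
  have hηε1 : η * ε_g ^ 2 < 1 := by nlinarith
  have hθpos : 0 < θ := by
    rw [hθ]
    have : η * ε_g ^ 2 / P < 1 := by
      rw [div_lt_one hPpos]; linarith
    linarith
  have hθlt1 : θ < 1 := by
    rw [hθ]
    have : 0 < η * ε_g ^ 2 / P := by positivity
    linarith
  -- per-success decrease
  have hdec : ∀ k, k < N → Succ k → f (u (k+1)) ≤ θ * f (u k) := by
    intro k hkN hk
    have hkN' : k ≤ N := hkN.le
    have hsuc := (hSucc k).mp hk
    rw [← (hupS k hk).1] at hsuc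
    rw [hmd k] at hsuc
    have hgR : ε_g ^ 2 * (2 * f (u k)) ≤ ‖g k‖ ^ 2 := by
      have h1 := (hstat k hkN').2.1
      have h2 : 0 ≤ ε_g * ‖Rh (u k)‖ := by positivity
      have : (ε_g * ‖Rh (u k)‖) ^ 2 ≤ ‖g k‖ ^ 2 := by nlinarith
      rw [hf (u k)]
      nlinarith [this]
    have hd1 : ‖g k‖ ^ 2 ≤ P * ⟪g k, w k⟫ := by
      calc ‖g k‖ ^ 2 ≤ ‖A k‖ * ⟪g k, w k⟫ := hAcs k
        _ ≤ (M_H + γ k) * ⟪g k, w k⟫ :=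
            mul_le_mul_of_nonneg_right (hAnorm k) (hgw_nonneg k)
        _ ≤ P * ⟪g k, w k⟫ := by
            apply mul_le_mul_of_nonneg_right _ (hgw_nonneg k)
            rw [hP]; linarith [hγub k]
    have hkey : (f (u k) - f (u (k+1))) * P ≥ η * ε_g ^ 2 * f (u k) := by
      nlinarith [hsuc, hd1, hgR, hgw_nonneg k, hη0.le]
    have hθF : θ * f (u k) = f (u k) - (η * ε_g ^ 2 * f (u k)) / P := by
      rw [hθ]; field_simp
    rw [hθF]
    rw [ge_iff_le, ← div_le_iff₀ hPpos] at hkey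
    linarith
  -- counting successes
  set S : ℕ → ℕ := fun k => ((Finset.range k).filter fun j => Succ j).card with hS
  have hfS : ∀ k, k ≤ N → f (u k) ≤ θ ^ (S k) * f (u 0) := by
    intro k
    induction k with
    | zero => intro _; simp [hS]
    | succ k ih =>
      intro hk1
      have hkN : k < N := hk1
      have ihk := ih hkN.le
      have hSsplit : (Finset.range (k+1)).filter (fun j => Succ j)
          = if Succ k then insert k ((Finset.range k).filter fun j => Succ j)
            else (Finset.range k).filter fun j => Succ j := by
        rw [Finset.range_add_one, Finset.filter_insert]
      by_cases hk : Succ k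
      · have hcard : S (k+1) = S k + 1 := by
          rw [hS]
          simp only [hSsplit, if_pos hk]
          rw [Finset.card_insert_of_notMem (by simp)]
        rw [hcard, pow_succ]
        calc f (u (k+1)) ≤ θ * f (u k) := hdec k hkN hk
          _ ≤ θ * (θ ^ (S k) * f (u 0)) := mul_le_mul_of_nonneg_left ihk hθpos.le
          _ = θ ^ (S k) * θ * f (u 0) := by ring
      · have hcard : S (k+1) = S k := by
          rw [hS]; simp only [hSsplit, if_neg hk]
        rw [hcard, (hupU k hk).1]
        exact ihk
  -- set cardinality
  have hcardeq : (Nat.card {k : ℕ | k < N ∧ Succ k} : ℕ) = S N := by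
    have : {k : ℕ | k < N ∧ Succ k} = ↑((Finset.range N).filter fun j => Succ j) := by
      ext j; simp [Finset.mem_filter, Finset.mem_range]
    rw [this, Nat.card_coe_set_eq, Set.ncard_coe_finset]
  -- bound on number of successes
  set Λ : ℝ := Real.log (2 * f (u 0) / ε_R ^ 2) with hΛ
  have hratio : (1:ℝ) ≤ 2 * f (u 0) / ε_R ^ 2 := by
    rw [le_div_iff₀ (by positivity)]; linarith
  have hΛ0 : 0 ≤ Λ := Real.log_nonneg hratio
  have hSbound : (S N : ℝ) * (η * ε_g ^ 2 / P) < Λ := by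
    have h1 : ε_R ^ 2 / 2 < θ ^ (S N) * f (u 0) := lt_of_lt_of_le (hfpos N le_rfl) (hfS N le_rfl)
    have h2 : ε_R ^ 2 / (2 * f (u 0)) < θ ^ (S N) := by
      rw [div_lt_iff₀ (by positivity)]
      calc ε_R ^ 2 = (ε_R ^ 2 / 2) * 2 := by ring
        _ < (θ ^ (S N) * f (u 0)) * 2 := by linarith
        _ = θ ^ (S N) * (2 * f (u 0)) := by ring
    have h3 : Real.log (ε_R ^ 2 / (2 * f (u 0))) < Real.log (θ ^ (S N)) :=
      Real.log_lt_log (by positivity) h2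
    rw [Real.log_pow] at h3
    have h4 : Real.log (ε_R ^ 2 / (2 * f (u 0))) = -Λ := by
      rw [hΛ, show ε_R ^ 2 / (2 * f (u 0)) = (2 * f (u 0) / ε_R ^ 2)⁻¹ by
        rw [inv_div], Real.log_inv]
    rw [h4] at h3
    have h5 : 1 - θ ≤ -Real.log θ := by
      have := Real.add_one_le_exp (Real.log θ)
      rw [Real.exp_log hθpos] at this
      linarith
    have h6 : (S N : ℝ) * (1 - θ) ≤ (S N : ℝ) * (-Real.log θ) :=
      mul_le_mul_of_nonneg_left h5 (Nat.cast_nonneg _)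
    have h7 : 1 - θ = η * ε_g ^ 2 / P := by rw [hθ]; ring
    rw [h7] at h6
    nlinarith [h3, h6]
  have hSb2 : (S N : ℝ) ≤ (P / (η * ε_g ^ 2)) * Λ := by
    have := hSbound
    rw [show (S N : ℝ) * (η * ε_g ^ 2 / P) = (S N : ℝ) * (η * ε_g ^ 2) / P by ring,
      div_lt_iff₀ hPpos] at this
    have h2 : (S N : ℝ) * (η * ε_g ^ 2) < Λ * P := this
    calc (S N : ℝ) = ((S N : ℝ) * (η * ε_g ^ 2)) / (η * ε_g ^ 2) := by field_simp
      _ ≤ (Λ * P) / (η * ε_g ^ 2) := by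
          apply div_le_div_of_nonneg_right h2.le hηε.le
      _ = (P / (η * ε_g ^ 2)) * Λ := by ring
  constructor
  · rw [hcardeq]
    calc (S N : ℝ) ≤ (P / (η * ε_g ^ 2)) * Λ := hSb2
      _ ≤ 1 + (P / (η * ε_g ^ 2)) * Λ := by linarith
  -- total iteration bound
  · set F : ℕ → ℕ := fun k => ((Finset.range k).filter fun j => ¬ Succ j).card with hF
    have hSF : ∀ k, S k + F k = k := by
      intro k
      rw [hS, hF]
      rw [Finset.card_filter_add_card_filter_not, Finset.card_range]
    have hpow : ∀ k, γmin * 2 ^ (F k) ≤ γ k * 2 ^ (S k) := by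
      intro k
      induction k with
      | zero => simpa [hS, hF] using hγ0
      | succ k ih =>
        have hsplitS : (Finset.range (k+1)).filter (fun j => Succ j)
            = if Succ k then insert k ((Finset.range k).filter fun j => Succ j)
              else (Finset.range k).filter fun j => Succ j := by
          rw [Finset.range_add_one, Finset.filter_insert]
        have hsplitF : (Finset.range (k+1)).filter (fun j => ¬ Succ j)
            = if ¬ Succ k then insert k ((Finset.range k).filter fun j => ¬ Succ j)
              else (Finset.range k).filter fun j => ¬ Succ j := by
          rw [Finset.range_add_one, Finset.filter_insert]
        by_cases hk : Succ k
        · have hc1 : S (k+1) = S k + 1 := by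
            simp only [hS, hsplitS, if_pos hk]
            exact Finset.card_insert_of_notMem (by simp)
          have hc2 : F (k+1) = F k := by
            rw [hF]; simp only [hsplitF, if_neg (not_not_intro hk)]
          rw [hc1, hc2, (hupS k hk).2, pow_succ]
          have : γ k / 2 ≤ max (γ k / 2) γmin := le_max_left _ _
          have h2 : (0:ℝ) < 2 ^ (S k) := by positivity
          calc γmin * 2 ^ (F k) ≤ γ k * 2 ^ (S k) := ih
            _ = (γ k / 2) * (2 ^ (S k) * 2) := by ring
            _ ≤ max (γ k / 2) γmin * (2 ^ (S k) * 2) := by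
                apply mul_le_mul_of_nonneg_right this (by positivity)
        · have hc1 : S (k+1) = S k := by
            rw [hS]; simp only [hsplitS, if_neg hk]
          have hc2 : F (k+1) = F k + 1 := by
            simp only [hF, hsplitF, if_pos hk]
            exact Finset.card_insert_of_notMem (by simp)
          rw [hc1, hc2, (hupU k hk).2, pow_succ]
          calc γmin * (2 ^ (F k) * 2) = (γmin * 2 ^ (F k)) * 2 := by ring
            _ ≤ (γ k * 2 ^ (S k)) * 2 := by linarith [ih]
            _ = 2 * γ k * 2 ^ (S k) := by ring
    have hFN : (F N : ℝ) ≤ Real.logb 2 (γmax / γmin) + (S N : ℝ) := by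
      have h1 : γmin * 2 ^ (F N) ≤ γmax * 2 ^ (S N) :=
        (hpow N).trans (mul_le_mul_of_nonneg_right (hγub N) (by positivity))
      have h2 : (2:ℝ) ^ (F N) ≤ (γmax / γmin) * 2 ^ (S N) := by
        rw [div_mul_eq_mul_div, le_div_iff₀ hγmin]
        calc (2:ℝ) ^ (F N) * γmin = γmin * 2 ^ (F N) := by ring
          _ ≤ γmax * 2 ^ (S N) := h1
      have hγmaxpos : 0 < γmax := lt_of_lt_of_le one_pos h1max
      have h3 := Real.logb_le_logb_of_le (b := 2) (by norm_num) (by positivity) h2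
      rw [Real.logb_mul (by positivity) (by positivity), Real.logb_pow, Real.logb_pow,
        Real.logb_self_eq_one (by norm_num)] at h3
      linarith [h3]
    have hNeq : (N : ℝ) = (S N : ℝ) + (F N : ℝ) := by
      have := hSF N
      exact_mod_cast (by exact_mod_cast congrArg (Nat.cast (R := ℝ)) this.symm)
    set B : ℝ := (P / (η * ε_g ^ 2)) * Λ with hB
    have hBpos : 0 ≤ B := by
      rw [hB]; positivity
    set lb : ℝ := Real.logb 2 (γmax / γmin) with hlb
    have hlb0 : 0 ≤ lb := by
      apply Real.logb_nonneg (by norm_num)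
      rw [le_div_iff₀ hγmin, one_mul]
      exact hγ0.trans hγ0max
    set D : ℝ := (⌈(1:ℝ) + lb⌉ : ℝ) with hD
    have hDlb : 1 + lb ≤ D := Int.le_ceil _
    have hD1 : 1 ≤ D := by linarith
    have hNle : (N : ℝ) ≤ 2 * (S N : ℝ) + lb := by
      rw [hNeq]; linarith [hFN]
    have hSN : (S N : ℝ) ≤ 1 + B := by
      calc (S N : ℝ) ≤ B := hSb2
        _ ≤ 1 + B := by linarith
    calc (N : ℝ) ≤ 2 * (S N : ℝ) + lb := hNle
      _ ≤ 2 * (1 + B) + (D - 1) := by linarith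
      _ = 1 + D + 2 * B := by ring
      _ ≤ (1 + D) * (2 + B) := by nlinarith [hBpos, hD1]
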